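/- Let ν ≥ 1 and K ≥ 1 be integers, t₀ ∈ ℤ, S a type, and F, G : ℤ → S. Suppose that for every k ∈ {0, 1, …, K−1} there exists an integer d with t₀ + kν − ν < d < t₀ + kν + ν and F(d) ≠ G(d). Then the set { d ∈ ℤ : t₀ − ν < d < t₀ + (K−1)ν + ν and F(d) ≠ G(d) } has at least ⌈K/2⌉ elements. -/

import Mathlib

/-- Counting argument from the proof of Theorem 3: if for each `k ∈ {0, …, K-1}`
the functions `F` and `G` differ at some index within distance `< ν` of `t₀ + kν`,
then `F` and `G` differ at at least `⌈K/2⌉` indices of the interval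
`(t₀ - ν, t₀ + (K-1)ν + ν)`. -/
theorem stmt_9 {S : Type*} (ν K t₀ : ℤ) (hν : 1 ≤ ν) (hK : 1 ≤ K)
    (F G : ℤ → S)
    (h : ∀ k : ℤ, 0 ≤ k → k < K →
      ∃ d : ℤ, t₀ + k * ν - ν < d ∧ d < t₀ + k * ν + ν ∧ F d ≠ G d) :
    (K + 1) / 2 ≤
      ({d : ℤ | t₀ - ν < d ∧ d < t₀ + (K - 1) * ν + ν ∧ F d ≠ G d}.ncard : ℤ) := by
  classical
  -- choice function
  choose f hf1 hf2 hf3 using h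
  set s : Finset ℤ := Finset.Ico (0 : ℤ) K with hs
  set Tfin : Finset ℤ :=
    (Finset.Ico (t₀ - ν + 1) (t₀ + (K - 1) * ν + ν)).filter (fun d => F d ≠ G d) with hT
  have hset : {d : ℤ | t₀ - ν < d ∧ d < t₀ + (K - 1) * ν + ν ∧ F d ≠ G d} = ↑Tfin := by
    ext d
    simp only [hT, Finset.coe_filter, Finset.mem_Ico, Set.mem_setOf_eq]
    constructor
    · rintro ⟨h1, h2, h3⟩; exact ⟨⟨by omega, h2⟩, h3⟩
    · rintro ⟨⟨h1, h2⟩, h3⟩; exact ⟨by omega, h2, h3⟩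
  rw [hset, Set.ncard_coe_finset]
  -- the (partial) choice function on s, as a total function
  set g : ℤ → ℤ := fun k => if hk : 0 ≤ k ∧ k < K then f k hk.1 hk.2 else 0 with hg
  have hgeq : ∀ k ∈ s, ∃ hk : 0 ≤ k ∧ k < K, g k = f k hk.1 hk.2 := by
    intro k hk
    have hk' : 0 ≤ k ∧ k < K := by simpa [hs] using hk
    exact ⟨hk', by simp [hg, hk']⟩
  have himg : ∀ k ∈ s, g k ∈ Tfin := by
    intro k hk
    obtain ⟨hk', hge⟩ := hgeq k hk
    rw [hge]
    have h1 := hf1 k hk'.1 hk'.2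
    have h2 := hf2 k hk'.1 hk'.2
    have h3 := hf3 k hk'.1 hk'.2
    simp only [hT, Finset.mem_filter, Finset.mem_Ico]
    refine ⟨⟨by nlinarith, by nlinarith⟩, h3⟩
  -- fiber bound: each d is the chosen point of at most two k's
  have hcard : s.card ≤ 2 * Tfin.card := by
    apply Finset.card_le_mul_card_image_of_maps_to himg
    intro a _
    set fib := s.filter (fun k => g k = a) with hfib
    have key : ∀ k ∈ fib, ∀ k' ∈ fib, k ≤ k' + 1 := by
      intro k hk k' hk'
      simp only [hfib, Finset.mem_filter] at hk hk'
      obtain ⟨hks, hka⟩ := hk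
      obtain ⟨hk's, hk'a⟩ := hk'
      obtain ⟨hk2, hge⟩ := hgeq k hks
      obtain ⟨hk'2, hge'⟩ := hgeq k' hk's
      have h1 : t₀ + k * ν - ν < a := by rw [← hka, hge]; exact hf1 k hk2.1 hk2.2
      have h2 : a < t₀ + k' * ν + ν := by rw [← hk'a, hge']; exact hf2 k' hk'2.1 hk'2.2
      nlinarith
    show fib.card ≤ 2
    rcases fib.eq_empty_or_nonempty with he | hne
    · simp [he]
    · set m := fib.min' hne with hm
      have hsub : fib ⊆ Finset.Icc m (m + 1) := by
        intro k hk
        simp only [Finset.mem_Icc]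
        exact ⟨fib.min'_le k hk, key k hk m (fib.min'_mem hne)⟩
      calc fib.card ≤ (Finset.Icc m (m + 1)).card := Finset.card_le_card hsub
        _ = 2 := by rw [Int.card_Icc]; omega
  have hK' : s.card = K.toNat := by simp [hs, Int.card_Ico]
  have : K ≤ 2 * (Tfin.card : ℤ) := by
    have := hcard
    rw [hK'] at this
    omega
  omega
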